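/- For every decision tree T, OPT_T ≤ 2 · sqrt( rank(T) · depth(T) ). -/
import Mathlib


/-- A deterministic decision tree over `{0,1}^n`: every internal node is labeled
by a query index `i ∈ Fin n` and has exactly two children (a 0-child and a
1-child); every leaf is labeled by an output value. -/
inductive DTree (n : ℕ) : Type where
  | leaf (b : Bool) : DTree n
  | node (i : Fin n) (t0 t1 : DTree n) : DTree n

namespace DTree

/-- On input `x`, from each internal node labeled `i` follow the edge to the
`x i`-child; output the label of the leaf reached. -/
def eval {n : ℕ} : DTree n → (Fin n → Bool) → Bool
  | leaf b, _ => b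
  | node i t0 t1, x => if x i then t1.eval x else t0.eval x

/-- `DTSize`: the total number of nodes of the tree. -/
def size {n : ℕ} : DTree n → ℕ
  | leaf _ => 1
  | node _ t0 t1 => 1 + t0.size + t1.size

/-- The depth: the maximum number of edges on a root-to-leaf path. -/
def depth {n : ℕ} : DTree n → ℕ
  | leaf _ => 0
  | node _ t0 t1 => 1 + max t0.depth t1.depth

/-- The rank of a binary tree: a leaf has rank 0; an internal node whose two
children have ranks `r₁, r₂` has rank `max r₁ r₂` if `r₁ ≠ r₂`, and `r₁ + 1`
if `r₁ = r₂`. -/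
def rank {n : ℕ} : DTree n → ℕ
  | leaf _ => 0
  | node _ t0 t1 => if t0.rank = t1.rank then t0.rank + 1 else max t0.rank t1.rank

end DTree

/-- The decision tree `t` computes the total Boolean function `f`. -/
def ComputesFn {n : ℕ} (t : DTree n) (f : (Fin n → Bool) → Bool) : Prop :=
  ∀ x, t.eval x = f x

/-- An assignment of one real weight to each edge of a binary tree, recorded as a
tree of the same shape: at every internal node, `w0` is the weight of the edge to
the 0-child and `w1` the weight of the edge to the 1-child. -/
inductive WTree : Type where
  | leaf : WTree
  | node (w0 w1 : ℝ) (c0 c1 : WTree) : WTree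

namespace WTree

/-- All weights are strictly positive. -/
def Pos : WTree → Prop
  | leaf => True
  | node w0 w1 c0 c1 => 0 < w0 ∧ 0 < w1 ∧ c0.Pos ∧ c1.Pos

/-- `max_{P ∈ P(T)} Σ_{e ∈ P} 1 / W_e`: the maximum over root-to-leaf paths `P`
of the sum of the inverse weights of the edges along `P`. -/
noncomputable def pathCost : WTree → ℝ
  | leaf => 0
  | node w0 w1 c0 c1 => max (1 / w0 + c0.pathCost) (1 / w1 + c1.pathCost)

/-- `max_{P ∈ P(T)} Σ_{e ∈ P̄} W_e`: the maximum over root-to-leaf paths `P` of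
the sum of the weights of the edges having exactly one endpoint on `P`
(i.e. at each internal node of `P`, the edge to the child off the path). -/
noncomputable def devCost : WTree → ℝ
  | leaf => 0
  | node w0 w1 c0 c1 => max (w1 + c0.devCost) (w0 + c1.devCost)

end WTree

/-- The weight assignment `w` has the same shape as the decision tree `t`
(i.e. it assigns a weight to each edge of `t`). -/
def MatchesW {n : ℕ} : DTree n → WTree → Prop
  | DTree.leaf _, WTree.leaf => True
  | DTree.node _ t0 t1, WTree.node _ _ c0 c1 => MatchesW t0 c0 ∧ MatchesW t1 c1
  | _, _ => False

/-- `OPT_T`: the infimum, over all positive weight assignments `W` to the edges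
of `T`, of `sqrt((max_{P} Σ_{e∈P̄} W_e) · (max_{P} Σ_{e∈P} 1/W_e))`.
For a single leaf this is `0`. -/
noncomputable def OPT {n : ℕ} (t : DTree n) : ℝ :=
  sInf {v : ℝ | ∃ w : WTree, MatchesW t w ∧ w.Pos ∧
    v = Real.sqrt (w.devCost * w.pathCost)}

section Aux
variable {n : ℕ}

def mkW (A B : ℝ) : DTree n → WTree
  | .leaf _ => .leaf
  | .node _ t0 t1 =>
      .node (if t1.rank < t0.rank then B else A)
            (if t0.rank < t1.rank then B else A)
            (mkW A B t0) (mkW A B t1)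

lemma mkW_pos {A B : ℝ} (hA : 0 < A) (hB : 0 < B) (t : DTree n) : (mkW A B t).Pos := by
  induction t with
  | leaf b => trivial
  | node i t0 t1 ih0 ih1 => refine ⟨?_, ?_, ih0, ih1⟩ <;> split <;> assumption

lemma pathCost_nonneg {w : WTree} (hw : w.Pos) : 0 ≤ w.pathCost := by
  induction w with
  | leaf => simp [WTree.pathCost]
  | node w0 w1 c0 c1 ih0 ih1 =>
      obtain ⟨h0, h1, hc0, hc1⟩ := hw
      have h := ih0 hc0
      have h2 : (0:ℝ) ≤ 1 / w0 + c0.pathCost := by positivity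
      exact le_trans h2 (le_max_left _ _)

lemma devCost_nonneg {w : WTree} (hw : w.Pos) : 0 ≤ w.devCost := by
  induction w with
  | leaf => simp [WTree.devCost]
  | node w0 w1 c0 c1 ih0 ih1 =>
      obtain ⟨h0, h1, hc0, hc1⟩ := hw
      have h := ih0 hc0
      have h2 : (0:ℝ) ≤ w1 + c0.devCost := by linarith
      exact le_trans h2 (le_max_left _ _)


lemma pstep1 {A B x r d Rr Dd : ℝ} (hA : 0 < A) (hB : 0 < B)
    (hx : x ≤ r / A + d / B) (hr : r ≤ Rr) (hd : d + 1 ≤ Dd) :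
    1 / B + x ≤ Rr / A + Dd / B := by
  have e1 : r / A ≤ Rr / A := by gcongr
  have e2 : (d + 1) / B ≤ Dd / B := by gcongr
  rw [add_div] at e2; linarith

lemma pstep2 {A B x r d Rr Dd : ℝ} (hA : 0 < A) (hB : 0 < B)
    (hx : x ≤ r / A + d / B) (hr : r + 1 ≤ Rr) (hd : d ≤ Dd) :
    1 / A + x ≤ Rr / A + Dd / B := by
  have e1 : (r + 1) / A ≤ Rr / A := by gcongr
  have e2 : d / B ≤ Dd / B := by gcongr
  rw [add_div] at e1; linarith

lemma dstep1 {A B x r d Rr Dd : ℝ} (hA : 0 < A) (hB : 0 < B)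
    (hx : x ≤ d * A + r * B) (hr : r + 1 ≤ Rr) (hd : d ≤ Dd) :
    B + x ≤ Dd * A + Rr * B := by
  nlinarith [mul_nonneg (sub_nonneg.2 hd) hA.le,
    mul_nonneg (sub_nonneg.2 (by linarith : r + 1 ≤ Rr)) hB.le]

lemma dstep2 {A B x r d Rr Dd : ℝ} (hA : 0 < A) (hB : 0 < B)
    (hx : x ≤ d * A + r * B) (hr : r ≤ Rr) (hd : d + 1 ≤ Dd) :
    A + x ≤ Dd * A + Rr * B := by
  nlinarith [mul_nonneg (sub_nonneg.2 hr) hB.le,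
    mul_nonneg (sub_nonneg.2 (by linarith : d + 1 ≤ Dd)) hA.le]

lemma pathCost_mkW {A B : ℝ} (hA : 0 < A) (hB : 0 < B) (t : DTree n) :
    (mkW A B t).pathCost ≤ (t.rank : ℝ) / A + (t.depth : ℝ) / B := by
  induction t with
  | leaf b => simp [mkW, WTree.pathCost, DTree.rank, DTree.depth]
  | node i t0 t1 ih0 ih1 =>
      simp only [mkW, WTree.pathCost]
      set R := (DTree.node i t0 t1).rank with hR
      set D := (DTree.node i t0 t1).depth with hD
      have hd0 : t0.depth + 1 ≤ D := by simp [hD, DTree.depth]; omega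
      have hd1 : t1.depth + 1 ≤ D := by simp [hD, DTree.depth]; omega
      have hr0 : t0.rank ≤ R := by simp [hR, DTree.rank]; split <;> omega
      have hr1 : t1.rank ≤ R := by simp [hR, DTree.rank]; split <;> omega
      apply max_le
      · split_ifs with h
        · exact pstep1 hA hB ih0 (by exact_mod_cast hr0) (by exact_mod_cast hd0)
        · have hr0' : t0.rank + 1 ≤ R := by simp [hR, DTree.rank]; split <;> omega
          exact pstep2 hA hB ih0 (by exact_mod_cast hr0')
            (by exact_mod_cast (by omega : t0.depth ≤ D))
      · split_ifs with h
        · exact pstep1 hA hB ih1 (by exact_mod_cast hr1) (by exact_mod_cast hd1)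
        · have hr1' : t1.rank + 1 ≤ R := by simp [hR, DTree.rank]; split <;> omega
          exact pstep2 hA hB ih1 (by exact_mod_cast hr1')
            (by exact_mod_cast (by omega : t1.depth ≤ D))

lemma devCost_mkW {A B : ℝ} (hA : 0 < A) (hB : 0 < B) (t : DTree n) :
    (mkW A B t).devCost ≤ (t.depth : ℝ) * A + (t.rank : ℝ) * B := by
  induction t with
  | leaf b => simp [mkW, WTree.devCost, DTree.rank, DTree.depth]
  | node i t0 t1 ih0 ih1 =>
      simp only [mkW, WTree.devCost]
      set R := (DTree.node i t0 t1).rank with hR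
      set D := (DTree.node i t0 t1).depth with hD
      have hd0 : t0.depth + 1 ≤ D := by simp [hD, DTree.depth]; omega
      have hd1 : t1.depth + 1 ≤ D := by simp [hD, DTree.depth]; omega
      have hr0 : t0.rank ≤ R := by simp [hR, DTree.rank]; split <;> omega
      have hr1 : t1.rank ≤ R := by simp [hR, DTree.rank]; split <;> omega
      apply max_le
      · split_ifs with h
        · have hr0' : t0.rank + 1 ≤ R := by simp [hR, DTree.rank]; split <;> omega
          exact dstep1 hA hB ih0 (by exact_mod_cast hr0')
            (by exact_mod_cast (by omega : t0.depth ≤ D))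
        · exact dstep2 hA hB ih0 (by exact_mod_cast hr0) (by exact_mod_cast hd0)
      · split_ifs with h
        · have hr1' : t1.rank + 1 ≤ R := by simp [hR, DTree.rank]; split <;> omega
          exact dstep1 hA hB ih1 (by exact_mod_cast hr1')
            (by exact_mod_cast (by omega : t1.depth ≤ D))
        · exact dstep2 hA hB ih1 (by exact_mod_cast hr1) (by exact_mod_cast hd1)
end Aux

lemma mkW_matches {n : ℕ} (A B : ℝ) (t : DTree n) : MatchesW t (mkW A B t) := by
  induction t with
  | leaf b => trivial
  | node i t0 t1 ih0 ih1 => exact ⟨ih0, ih1⟩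

/-- For every decision tree `T`,
`OPT_T ≤ 2 · sqrt(rank(T) · depth(T))`. -/
theorem OPT_le_two_sqrt_rank_depth {n : ℕ} (t : DTree n) :
    OPT t ≤ 2 * Real.sqrt ((t.rank : ℝ) * (t.depth : ℝ)) := by
  have hbdd : BddBelow {v : ℝ | ∃ w : WTree, MatchesW t w ∧ w.Pos ∧
      v = Real.sqrt (w.devCost * w.pathCost)} := by
    refine ⟨0, fun v hv => ?_⟩
    obtain ⟨w, _, _, hv⟩ := hv
    rw [hv]; exact Real.sqrt_nonneg _
  cases t with
  | leaf b =>
      have hmem : (0:ℝ) ∈ {v : ℝ | ∃ w : WTree, MatchesW (DTree.leaf b : DTree n) w ∧ w.Pos ∧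
          v = Real.sqrt (w.devCost * w.pathCost)} := by
        refine ⟨WTree.leaf, trivial, trivial, ?_⟩
        simp [WTree.devCost, WTree.pathCost]
      have h := csInf_le hbdd hmem
      have : (0:ℝ) ≤ 2 * Real.sqrt (((DTree.leaf b : DTree n).rank : ℝ) *
          ((DTree.leaf b : DTree n).depth : ℝ)) := by positivity
      exact le_trans h this
  | node i t0 t1 =>
      set T := DTree.node i t0 t1 with hT
      have hrpos : 1 ≤ T.rank := by simp [hT, DTree.rank]; split <;> omega
      have hdpos : 1 ≤ T.depth := by simp [hT, DTree.depth]
      set A : ℝ := (T.rank : ℝ) with hAdef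
      set B : ℝ := (T.depth : ℝ) with hBdef
      have hA : 0 < A := by rw [hAdef]; exact_mod_cast hrpos
      have hB : 0 < B := by rw [hBdef]; exact_mod_cast hdpos
      set w := mkW A B T with hw
      have hmem : Real.sqrt (w.devCost * w.pathCost) ∈
          {v : ℝ | ∃ w' : WTree, MatchesW T w' ∧ w'.Pos ∧
            v = Real.sqrt (w'.devCost * w'.pathCost)} :=
        ⟨w, mkW_matches A B T, mkW_pos hA hB T, rfl⟩
      have h1 := csInf_le hbdd hmem
      refine le_trans h1 ?_
      have hpath : w.pathCost ≤ 2 := by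
        have := pathCost_mkW hA hB T
        rw [← hAdef, ← hBdef] at this
        rw [div_self hA.ne', div_self hB.ne'] at this
        linarith
      have hdev : w.devCost ≤ 2 * (A * B) := by
        have := devCost_mkW hA hB T
        rw [← hAdef, ← hBdef] at this
        nlinarith
      have hprod : w.devCost * w.pathCost ≤ 2 ^ 2 * (A * B) := by
        have h0 : 0 ≤ w.pathCost := pathCost_nonneg (mkW_pos hA hB T)
        have h2 : 0 ≤ 2 * (A * B) := by positivity
        nlinarith [devCost_nonneg (mkW_pos hA hB T)]
      calc Real.sqrt (w.devCost * w.pathCost)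
          ≤ Real.sqrt (2 ^ 2 * (A * B)) := Real.sqrt_le_sqrt hprod
        _ = 2 * Real.sqrt (A * B) := by
            rw [Real.sqrt_mul (by norm_num : (0:ℝ) ≤ 2 ^ 2),
              Real.sqrt_sq (by norm_num : (0:ℝ) ≤ 2)]
        _ = 2 * Real.sqrt ((T.rank : ℝ) * (T.depth : ℝ)) := by rw [hAdef, hBdef]
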